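/- Let D be a finite distributive lattice. For a join-irreducible element b of D, let b̄ denote the supremum of {x ∈ D : ¬(b ≤ x)} (the largest element of D not above b). Let 𝒜 and ℬ be antichains of join-irreducible elements of D with 2 ≤ |𝒜| ≤ |ℬ| and 𝒜 ≤ ℬ. Then the set [𝒜, ℬ̄] = {x ∈ D : ∃ a ∈ 𝒜, ∃ b ∈ ℬ, a ≤ x ≤ b̄} is the union of |ℬ| closed intervals of the form [a, b̄] with a ∈ 𝒜 and b ∈ ℬ; more precisely, there is a function g : ℬ → 𝒜 with ⋃_{b ∈ ℬ} Icc (g b) b̄ = [𝒜, ℬ̄]. -/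

import Mathlib

open Finset

open Fin.NatCast Fin.CommRing in
private lemma fin_cycle_closed {t : ℕ} [NeZero t] (p : Fin t → Prop)
    (h0 : ∃ i, p i) (hcl : ∀ i, p i → p (i + 1)) : ∀ j, p j := by
  obtain ⟨i0, hi0⟩ := h0
  have key : ∀ k : ℕ, p (i0 + (k : Fin t)) := by
    intro k
    induction k with
    | zero => simpa using hi0
    | succ n ih =>
        have h1 : ((n + 1 : ℕ) : Fin t) = (n : Fin t) + 1 := by push_cast; ring
        rw [h1, ← add_assoc]
        exact hcl _ ih
  intro j
  have h2 := key (j - i0).val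
  have h3 : i0 + ((j - i0).val : Fin t) = j := by
    rw [Fin.cast_val_eq_self]; abel
  rwa [h3] at h2

private lemma exists_good_g {D : Type*} [PartialOrder D] [DecidableEq D]
    (𝒜 ℬ : Finset D) (h𝒜ne : 𝒜.Nonempty) (hcard : 𝒜.card ≤ ℬ.card)
    (hle₁ : ∀ a ∈ 𝒜, ∃ b ∈ ℬ, a ≤ b) (hle₂ : ∀ b ∈ ℬ, ∃ a ∈ 𝒜, a ≤ b) :
    ∃ g : D → D, (∀ b ∈ ℬ, g b ∈ 𝒜) ∧ (∀ a ∈ 𝒜, ∃ b ∈ ℬ, g b = a) ∧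
      ∀ B₂ ⊆ ℬ, B₂.Nonempty → B₂ ≠ ℬ →
        ∃ b ∈ B₂, ∃ b' ∈ ℬ, b' ∉ B₂ ∧ g b ≤ b' := by
  classical
  -- a maximum matching
  have hcoll : ((𝒜 ×ˢ ℬ).powerset.filter fun M : Finset (D × D) =>
      (∀ p ∈ M, p.1 ∈ 𝒜 ∧ p.2 ∈ ℬ ∧ p.1 ≤ p.2) ∧
      (∀ p ∈ M, ∀ q ∈ M, p.1 = q.1 → p = q) ∧
      (∀ p ∈ M, ∀ q ∈ M, p.2 = q.2 → p = q)).Nonempty := by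
    refine ⟨∅, ?_⟩
    simp
  obtain ⟨M, hMmem, hMmax⟩ := Finset.exists_max_image _ Finset.card hcoll
  rw [Finset.mem_filter] at hMmem
  obtain ⟨hMsub', hM1, hM2, hM3⟩ := hMmem
  set AM := M.image Prod.fst with hAMdef
  set BM := M.image Prod.snd with hBMdef
  have hMaximal : ∀ a ∈ 𝒜, ∀ b ∈ ℬ, a ∉ AM → b ∉ BM → ¬ a ≤ b := by
    intro a ha b hb hna hnb hab
    have hnotmem : (a, b) ∉ M := fun h => hna (Finset.mem_image.2 ⟨_, h, rfl⟩)
    have hins : insert (a, b) M ∈ (𝒜 ×ˢ ℬ).powerset.filter fun M : Finset (D × D) =>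
        (∀ p ∈ M, p.1 ∈ 𝒜 ∧ p.2 ∈ ℬ ∧ p.1 ≤ p.2) ∧
        (∀ p ∈ M, ∀ q ∈ M, p.1 = q.1 → p = q) ∧
        (∀ p ∈ M, ∀ q ∈ M, p.2 = q.2 → p = q) := by
      rw [Finset.mem_filter, Finset.mem_powerset]
      refine ⟨?_, ?_, ?_, ?_⟩
      · intro p hp
        rcases Finset.mem_insert.1 hp with rfl | hp
        · exact Finset.mem_product.2 ⟨ha, hb⟩
        · exact Finset.mem_powerset.1 hMsub' hp
      · intro p hp
        rcases Finset.mem_insert.1 hp with rfl | hp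
        · exact ⟨ha, hb, hab⟩
        · exact hM1 p hp
      · intro p hp q hq hpq
        rcases Finset.mem_insert.1 hp with rfl | hp <;>
          rcases Finset.mem_insert.1 hq with rfl | hq
        · rfl
        · exact absurd (Finset.mem_image.2 ⟨q, hq, hpq.symm⟩) hna
        · exact absurd (Finset.mem_image.2 ⟨p, hp, hpq⟩) hna
        · exact hM2 p hp q hq hpq
      · intro p hp q hq hpq
        rcases Finset.mem_insert.1 hp with rfl | hp <;>
          rcases Finset.mem_insert.1 hq with rfl | hq
        · rfl
        · exact absurd (Finset.mem_image.2 ⟨q, hq, hpq.symm⟩) hnb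
        · exact absurd (Finset.mem_image.2 ⟨p, hp, hpq⟩) hnb
        · exact hM3 p hp q hq hpq
    have hle := hMmax _ hins
    rw [Finset.card_insert_of_notMem hnotmem] at hle
    omega
  have hAMsub : AM ⊆ 𝒜 := by
    intro a ha
    obtain ⟨p, hp, rfl⟩ := Finset.mem_image.1 ha
    exact (hM1 p hp).1
  have hBMsub : BM ⊆ ℬ := by
    intro b hb
    obtain ⟨p, hp, rfl⟩ := Finset.mem_image.1 hb
    exact (hM1 p hp).2.1
  have hcardAM : AM.card = M.card :=
    Finset.card_image_of_injOn (fun p hp q hq h => hM2 p hp q hq h)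
  have hcardBM : BM.card = M.card :=
    Finset.card_image_of_injOn (fun p hp q hq h => hM3 p hp q hq h)
  -- partner functions
  have hmatchBex : ∀ a : D, ∃ b : D, a ∈ AM → (a, b) ∈ M := by
    intro a
    by_cases ha : a ∈ AM
    · obtain ⟨p, hp, hpa⟩ := Finset.mem_image.1 ha
      subst hpa
      exact ⟨p.2, fun _ => by simpa using hp⟩
    · exact ⟨a, fun h => absurd h ha⟩
  choose matchB hmatchB using hmatchBex
  have hvalex : ∀ w : D, ∃ a : D, w ∈ ℬ →
      (a ∈ 𝒜 ∧ a ≤ w ∧ (w ∈ BM → (a, w) ∈ M)) := by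
    intro w
    by_cases hw : w ∈ BM
    · obtain ⟨p, hp, hpw⟩ := Finset.mem_image.1 hw
      subst hpw
      exact ⟨p.1, fun _ => ⟨(hM1 p hp).1, (hM1 p hp).2.2, fun _ => by simpa using hp⟩⟩
    · by_cases hw2 : w ∈ ℬ
      · obtain ⟨a, ha, haw⟩ := hle₂ w hw2
        exact ⟨a, fun _ => ⟨ha, haw, fun h => absurd h hw⟩⟩
      · exact ⟨w, fun h => absurd h hw2⟩
  choose val hval using hvalex
  have hvalmatch : ∀ a ∈ AM, val (matchB a) = a := by
    intro a ha
    have h1 : (a, matchB a) ∈ M := hmatchB a ha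
    have h2 : matchB a ∈ BM := Finset.mem_image.2 ⟨_, h1, rfl⟩
    have h5 := hval (matchB a) (hBMsub h2)
    have h6 : (val (matchB a), matchB a) ∈ M := h5.2.2 h2
    exact congrArg Prod.fst (hM3 _ h6 _ h1 rfl)
  -- unmatched elements and spares
  set UA := 𝒜 \ AM with hUAdef
  have hUAcard : UA.card ≤ (ℬ \ BM).card := by
    rw [Finset.card_sdiff_of_subset hAMsub, Finset.card_sdiff_of_subset hBMsub, hcardAM, hcardBM]
    omega
  obtain ⟨T, hTsub, hTcard⟩ := Finset.le_card_iff_exists_subset_card.1 hUAcard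
  have heqv : UA.card = T.card := hTcard.symm
  obtain ⟨ι, hιT, hιinj⟩ : ∃ ι : D → D, (∀ a ∈ UA, ι a ∈ T) ∧
      (∀ a ∈ UA, ∀ a' ∈ UA, ι a = ι a' → a = a') := by
    have eqv := Finset.equivOfCardEq heqv
    refine ⟨fun a => if h : a ∈ UA then ((eqv ⟨a, h⟩ : ↥T) : D) else a, ?_, ?_⟩
    · intro a ha
      simp only [dif_pos ha]
      exact (eqv ⟨a, ha⟩).2
    · intro a ha a' ha' h
      simp only [dif_pos ha, dif_pos ha'] at h
      have := eqv.injective (Subtype.ext h)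
      exact congrArg Subtype.val this
  set S := UA.image ι with hSdef
  set W := ℬ \ S with hWdef
  have hSsub : S ⊆ ℬ \ BM := by
    intro b hb
    obtain ⟨a, ha, rfl⟩ := Finset.mem_image.1 hb
    exact hTsub (hιT a ha)
  have hWsub : W ⊆ ℬ := Finset.sdiff_subset
  have hBMW : BM ⊆ W := by
    intro b hb
    refine Finset.mem_sdiff.2 ⟨hBMsub hb, fun hbS => ?_⟩
    exact (Finset.mem_sdiff.1 (hSsub hbS)).2 hb
  have huinvex : ∀ b : D, ∃ a : D, b ∈ S → (a ∈ UA ∧ ι a = b) := by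
    intro b
    by_cases hb : b ∈ S
    · obtain ⟨a, ha, rfl⟩ := Finset.mem_image.1 hb
      exact ⟨a, fun _ => ⟨ha, rfl⟩⟩
    · exact ⟨b, fun h => absurd h hb⟩
  choose uinv huinv using huinvex
  -- cycle on W
  have hMne : M.Nonempty := by
    by_contra h
    rw [Finset.not_nonempty_iff_eq_empty] at h
    obtain ⟨a, ha⟩ := h𝒜ne
    obtain ⟨b, hb, hab⟩ := hle₁ a ha
    refine hMaximal a ha b hb ?_ ?_ hab <;> simp [hAMdef, hBMdef, h]
  have hWne : W.Nonempty := by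
    obtain ⟨p, hp⟩ := hMne
    exact ⟨p.2, hBMW (Finset.mem_image.2 ⟨p, hp, rfl⟩)⟩
  have ht0 : 0 < W.card := Finset.card_pos.2 hWne
  haveI : NeZero W.card := ⟨by omega⟩
  obtain ⟨wv, idx, hwvW, hidx1, hidx2⟩ : ∃ (wv : Fin W.card → D) (idx : D → Fin W.card),
      (∀ i, wv i ∈ W) ∧ (∀ w ∈ W, wv (idx w) = w) ∧ (∀ i, idx (wv i) = i) := by
    have e := W.equivFin
    refine ⟨fun i => ((e.symm i : ↥W) : D),
      fun w => if h : w ∈ W then e ⟨w, h⟩ else 0, fun i => (e.symm i).2, ?_, ?_⟩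
    · intro w hw
      simp only [dif_pos hw]
      rw [Equiv.symm_apply_apply]
    · intro i
      have hmem : ((e.symm i : ↥W) : D) ∈ W := (e.symm i).2
      simp only [dif_pos hmem]
      have : (⟨((e.symm i : ↥W) : D), hmem⟩ : ↥W) = e.symm i := Subtype.ext rfl
      rw [this, Equiv.apply_symm_apply]
  -- the function g
  set g : D → D := fun b =>
    if b ∈ S then uinv b else if b ∈ W then val (wv (idx b + 1)) else b with hgdef
  have hg_cyc : ∀ i : Fin W.card, g (wv i) = val (wv (i + 1)) := by
    intro i
    have h1 : wv i ∈ W := hwvW i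
    have h2 : wv i ∉ S := (Finset.mem_sdiff.1 h1).2
    rw [hgdef]
    simp only [if_neg h2, if_pos h1, hidx2 i]
  have hgS : ∀ b ∈ S, g b = uinv b := by
    intro b hb
    rw [hgdef]
    simp only [if_pos hb]
  -- every matched a is hit from inside W
  have hAMhit : ∀ a ∈ AM, ∃ w ∈ W, g w = a := by
    intro a ha
    have h1 : (a, matchB a) ∈ M := hmatchB a ha
    have h2 : matchB a ∈ BM := Finset.mem_image.2 ⟨_, h1, rfl⟩
    have h2' : matchB a ∈ W := hBMW h2
    refine ⟨wv (idx (matchB a) - 1), hwvW _, ?_⟩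
    rw [hg_cyc (idx (matchB a) - 1)]
    rw [sub_add_cancel, hidx1 _ h2']
    exact hvalmatch a ha
  refine ⟨g, ?_, ?_, ?_⟩
  · -- g maps ℬ into 𝒜
    intro b hb
    by_cases hbS : b ∈ S
    · rw [hgS b hbS]
      exact (Finset.mem_sdiff.1 (huinv b hbS).1).1
    · have hbW : b ∈ W := Finset.mem_sdiff.2 ⟨hb, hbS⟩
      rw [hgdef]
      simp only [if_neg hbS, if_pos hbW]
      exact (hval _ (hWsub (hwvW _))).1
  · -- surjectivity
    intro a ha
    by_cases haM : a ∈ AM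
    · obtain ⟨w, hw, hgw⟩ := hAMhit a haM
      exact ⟨w, hWsub hw, hgw⟩
    · have haU : a ∈ UA := Finset.mem_sdiff.2 ⟨ha, haM⟩
      have hιa : ι a ∈ S := Finset.mem_image.2 ⟨a, haU, rfl⟩
      refine ⟨ι a, (Finset.mem_sdiff.1 (hSsub hιa)).1, ?_⟩
      rw [hgS _ hιa]
      obtain ⟨h1, h2⟩ := huinv (ι a) hιa
      exact hιinj _ h1 _ haU h2
  · -- the out-edge property
    intro B₂ hB₂sub hB₂ne hB₂neq
    by_cases hA : ∃ i : Fin W.card, wv i ∈ B₂ ∧ wv (i + 1) ∉ B₂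
    · obtain ⟨i, h1, h2⟩ := hA
      refine ⟨wv i, h1, wv (i + 1), hWsub (hwvW _), h2, ?_⟩
      rw [hg_cyc i]
      exact (hval _ (hWsub (hwvW _))).2.1
    · push_neg at hA
      by_cases hBW : ∃ w ∈ W, w ∈ B₂
      · -- W ⊆ B₂
        have hWsubB₂ : ∀ w ∈ W, w ∈ B₂ := by
          obtain ⟨w0, hw0W, hw0B⟩ := hBW
          have hall := fin_cycle_closed (fun i => wv i ∈ B₂)
            ⟨idx w0, show wv (idx w0) ∈ B₂ by rw [hidx1 w0 hw0W]; exact hw0B⟩ hA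
          intro w hw
          have hw2 : wv (idx w) ∈ B₂ := hall (idx w)
          rwa [hidx1 w hw] at hw2
        obtain ⟨b', hb'ℬ, hb'B₂⟩ : ∃ b' ∈ ℬ, b' ∉ B₂ := by
          by_contra h
          push_neg at h
          exact hB₂neq (Finset.Subset.antisymm hB₂sub h)
        have hb'S : b' ∈ S := by
          by_contra h
          exact hb'B₂ (hWsubB₂ b' (Finset.mem_sdiff.2 ⟨hb'ℬ, h⟩))
        obtain ⟨a', ha', ha'b⟩ := hle₂ b' hb'ℬ
        have ha'AM : a' ∈ AM := by
          by_contra h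
          have hb'BM : b' ∉ BM := (Finset.mem_sdiff.1 (hSsub hb'S)).2
          exact hMaximal a' ha' b' hb'ℬ h hb'BM ha'b
        obtain ⟨w, hwW, hgw⟩ := hAMhit a' ha'AM
        exact ⟨w, hWsubB₂ w hwW, b', hb'ℬ, hb'B₂, hgw ▸ ha'b⟩
      · -- B₂ misses W entirely
        push_neg at hBW
        obtain ⟨b, hbB₂⟩ := hB₂ne
        have hbS : b ∈ S := by
          by_contra h
          exact hBW b (Finset.mem_sdiff.2 ⟨hB₂sub hbB₂, h⟩) hbB₂
        obtain ⟨haU, hib⟩ := huinv b hbS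
        have ha𝒜 : uinv b ∈ 𝒜 := (Finset.mem_sdiff.1 haU).1
        obtain ⟨b'', hb''ℬ, hab''⟩ := hle₁ _ ha𝒜
        have hb''BM : b'' ∈ BM := by
          by_contra h
          exact hMaximal _ ha𝒜 b'' hb''ℬ (Finset.mem_sdiff.1 haU).2 h hab''
        refine ⟨b, hbB₂, b'', hb''ℬ, fun hc => hBW b'' (hBMW hb''BM) hc, ?_⟩
        rw [hgS b hbS]
        exact hab''


/-- **Theorem (distributive lattice version of Theorem 2).** Let `D` be a finite
distributive lattice, and for a join-irreducible `b` let `bar b` denote the largest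
element of `D` not above `b` (the join of all elements not above `b`). Let `𝒜` and
`ℬ` be antichains of join-irreducible elements with `2 ≤ |𝒜| ≤ |ℬ|` and `𝒜 ≤ ℬ`.
Then `[𝒜, ℬ̄] = {x | ∃ a ∈ 𝒜, ∃ b ∈ ℬ, a ≤ x ≤ bar b}` is the union of `|ℬ|`
intervals `[g b, bar b]` with `g b ∈ 𝒜`. -/
theorem stmt2 {D : Type*} [DistribLattice D] [Fintype D] [BoundedOrder D]
    [DecidableEq D] [DecidableRel ((· ≤ ·) : D → D → Prop)]
    (bar : D → D)
    (hbar : ∀ b : D, bar b = (Finset.univ.filter fun x : D => ¬ b ≤ x).sup id)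
    (𝒜 ℬ : Finset D)
    (h𝒜irr : ∀ a ∈ 𝒜, SupIrred a) (hℬirr : ∀ b ∈ ℬ, SupIrred b)
    (h𝒜 : IsAntichain (· ≤ ·) (𝒜 : Set D)) (hℬ : IsAntichain (· ≤ ·) (ℬ : Set D))
    (h2 : 2 ≤ 𝒜.card) (hcard : 𝒜.card ≤ ℬ.card)
    (hle₁ : ∀ a ∈ 𝒜, ∃ b ∈ ℬ, a ≤ b) (hle₂ : ∀ b ∈ ℬ, ∃ a ∈ 𝒜, a ≤ b) :
    ∃ g : D → D, (∀ b ∈ ℬ, g b ∈ 𝒜) ∧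
      (⋃ b ∈ ℬ, Set.Icc (g b) (bar b)) =
        {x : D | ∃ a ∈ 𝒜, ∃ b ∈ ℬ, a ≤ x ∧ x ≤ bar b} := by
  classical
  have h𝒜ne : 𝒜.Nonempty := Finset.card_pos.1 (by omega)
  obtain ⟨g, hg𝒜, hgsurj, hgG2⟩ := exists_good_g 𝒜 ℬ h𝒜ne hcard hle₁ hle₂
  have hbarle : ∀ b x : D, ¬ b ≤ x → x ≤ bar b := by
    intro b x h
    rw [hbar]
    exact Finset.le_sup (f := id) (Finset.mem_filter.2 ⟨Finset.mem_univ x, h⟩)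
  have hbarnot : ∀ b ∈ ℬ, ∀ x : D, x ≤ bar b → ¬ b ≤ x := by
    intro b hb x hx hbx
    have h1 : b ≤ bar b := hbx.trans hx
    rw [hbar] at h1
    obtain ⟨y, hy, hby⟩ := (SupPrime.le_finset_sup (hℬirr b hb).supPrime).1 h1
    exact (Finset.mem_filter.1 hy).2 hby
  refine ⟨g, hg𝒜, ?_⟩
  ext x
  simp only [Set.mem_iUnion, Set.mem_Icc, Set.mem_setOf_eq, exists_prop]
  constructor
  · rintro ⟨b, hb, h1, h2'⟩
    exact ⟨g b, hg𝒜 b hb, b, hb, h1, h2'⟩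
  · rintro ⟨a, ha, b₀, hb₀, hax, hxbar⟩
    by_cases hB₁ : ∃ b ∈ ℬ, b ≤ x
    · obtain ⟨b₁, hb₁, hb₁x⟩ := hB₁
      set B₂ := ℬ.filter (fun b => ¬ b ≤ x) with hB₂def
      have hb₀B₂ : b₀ ∈ B₂ := Finset.mem_filter.2 ⟨hb₀, hbarnot b₀ hb₀ x hxbar⟩
      have hB₂sub : B₂ ⊆ ℬ := Finset.filter_subset _ _
      have hB₂neq : B₂ ≠ ℬ := by
        intro h
        have hb₁' : b₁ ∈ B₂ := h ▸ hb₁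
        exact (Finset.mem_filter.1 hb₁').2 hb₁x
      obtain ⟨b, hbB₂, b', hb'ℬ, hb'B₂, hgb⟩ := hgG2 B₂ hB₂sub ⟨b₀, hb₀B₂⟩ hB₂neq
      have hb'x : b' ≤ x := by
        by_contra h
        exact hb'B₂ (Finset.mem_filter.2 ⟨hb'ℬ, h⟩)
      exact ⟨b, hB₂sub hbB₂, hgb.trans hb'x,
        hbarle b x (Finset.mem_filter.1 hbB₂).2⟩
    · push_neg at hB₁
      obtain ⟨b₁, hb₁, hgb₁⟩ := hgsurj a ha
      exact ⟨b₁, hb₁, hgb₁ ▸ hax, hbarle b₁ x (hB₁ b₁ hb₁)⟩
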